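/- Let m(x,r,h) = σ_{1+2h}(r)·(ζ²(1+h)/ζ(2+2h))·x^h(1+x)^h + r^{2h}σ_{1−2h}(r)·(ζ²(1−h)/ζ(2−2h)) + r^h σ₁(r)·(ζ(1+h)ζ(1−h)/ζ(2))·(x^h+(1+x)^h). Then the limit m(x,r) = lim_{h→0} m(x,r,h) exists and equals (σ₁(r)/ζ(2))·(log x·log(1+x) + log(x(1+x))·(2γ₀−log r) + (2γ₀−log r)²) + (log(x(1+x)) + 4γ₀ − 2log r)·(d/dh)(σ_{1+2h}(r)/ζ(2+2h))|_{h=0} + (d²/dh²)(σ_{1+2h}(r)/ζ(2+2h))|_{h=0}. -/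

import Mathlib

open Complex Real Filter Topology

/-- The generalized divisor sum `σ_z(n) = Σ_{d|n} d^z` with complex exponent. -/
noncomputable def sigmaC (z : ℂ) (n : ℕ) : ℂ := ∑ d ∈ n.divisors, (d : ℂ) ^ z

/-- The function `m(x,r,h)` from Motohashi's formula for the additive divisor problem. -/
noncomputable def mxrh (x : ℝ) (r : ℕ) (h : ℂ) : ℂ :=
  sigmaC (1 + 2 * h) r * (riemannZeta (1 + h) ^ 2 / riemannZeta (2 + 2 * h)) *
      (x : ℂ) ^ h * ((1 : ℂ) + x) ^ h
    + (r : ℂ) ^ (2 * h) * sigmaC (1 - 2 * h) r *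
      (riemannZeta (1 - h) ^ 2 / riemannZeta (2 - 2 * h))
    + (r : ℂ) ^ h * sigmaC 1 r * (riemannZeta (1 + h) * riemannZeta (1 - h) / riemannZeta 2) *
      ((x : ℂ) ^ h + ((1 : ℂ) + x) ^ h)

/-- 2-jet data of an analytic function at 0. -/
structure J2 (f : ℂ → ℂ) (b0 b1 b2 : ℂ) : Prop where
  an : AnalyticAt ℂ f 0
  v0 : f 0 = b0
  v1 : deriv f 0 = b1
  v2 : iteratedDeriv 2 f 0 = b2

lemma analyticAt_deriv {f : ℂ → ℂ} {x : ℂ} (h : AnalyticAt ℂ f x) :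
    AnalyticAt ℂ (deriv f) x := by
  have : deriv f = fun y => (ContinuousLinearMap.apply ℂ ℂ (1:ℂ)) (fderiv ℂ f y) := by
    funext y; simp [ContinuousLinearMap.apply_apply, fderiv_apply_one_eq_deriv]
  rw [this]
  exact ((ContinuousLinearMap.apply ℂ ℂ (1:ℂ)).analyticAt _).comp h.fderiv

lemma J2.mul {f g : ℂ → ℂ} {b0 b1 b2 c0 c1 c2 : ℂ} (hf : J2 f b0 b1 b2) (hg : J2 g c0 c1 c2) :
    J2 (fun h => f h * g h) (b0 * c0) (b1 * c0 + b0 * c1) (b2 * c0 + 2 * b1 * c1 + b0 * c2) := by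
  refine ⟨hf.an.mul hg.an, by simp [hf.v0, hg.v0], ?_, ?_⟩
  · rw [deriv_fun_mul hf.an.differentiableAt hg.an.differentiableAt, hf.v0, hg.v0, hf.v1, hg.v1]
  · have hev : deriv (fun h => f h * g h) =ᶠ[𝓝 0]
        fun y => deriv f y * g y + f y * deriv g y := by
      filter_upwards [hf.an.eventually_analyticAt, hg.an.eventually_analyticAt] with y hfy hgy
      exact deriv_mul hfy.differentiableAt hgy.differentiableAt
    rw [iteratedDeriv_succ, iteratedDeriv_one, hev.deriv_eq]
    rw [deriv_fun_add (f := fun y => deriv f y * g y) (g := fun y => f y * deriv g y)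
      ((analyticAt_deriv hf.an).mul hg.an).differentiableAt
      (hf.an.mul (analyticAt_deriv hg.an)).differentiableAt,
      deriv_fun_mul (analyticAt_deriv hf.an).differentiableAt hg.an.differentiableAt,
      deriv_fun_mul hf.an.differentiableAt (analyticAt_deriv hg.an).differentiableAt]
    have h2f : deriv (deriv f) 0 = b2 := by
      rw [← iteratedDeriv_one (f := f)] at *
      rw [← iteratedDeriv_succ, hf.v2]
    have h2g : deriv (deriv g) 0 = c2 := by
      rw [← iteratedDeriv_one (f := g)] at *
      rw [← iteratedDeriv_succ, hg.v2]
    rw [h2f, h2g, hf.v0, hg.v0, hf.v1, hg.v1]; ring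

lemma J2.add {f g : ℂ → ℂ} {b0 b1 b2 c0 c1 c2 : ℂ} (hf : J2 f b0 b1 b2) (hg : J2 g c0 c1 c2) :
    J2 (fun h => f h + g h) (b0 + c0) (b1 + c1) (b2 + c2) := by
  refine ⟨hf.an.add hg.an, by simp [hf.v0, hg.v0], ?_, ?_⟩
  · rw [deriv_fun_add hf.an.differentiableAt hg.an.differentiableAt, hf.v1, hg.v1]
  · have hev : deriv (fun h => f h + g h) =ᶠ[𝓝 0] fun y => deriv f y + deriv g y := by
      filter_upwards [hf.an.eventually_analyticAt, hg.an.eventually_analyticAt] with y hfy hgy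
      exact deriv_add hfy.differentiableAt hgy.differentiableAt
    rw [iteratedDeriv_succ, iteratedDeriv_one, hev.deriv_eq,
      deriv_fun_add (analyticAt_deriv hf.an).differentiableAt
        (analyticAt_deriv hg.an).differentiableAt]
    have h2f : deriv (deriv f) 0 = b2 := by rw [← iteratedDeriv_one (f := f), ← iteratedDeriv_succ, hf.v2]
    have h2g : deriv (deriv g) 0 = c2 := by rw [← iteratedDeriv_one (f := g), ← iteratedDeriv_succ, hg.v2]
    rw [h2f, h2g]

lemma J2.sub {f g : ℂ → ℂ} {b0 b1 b2 c0 c1 c2 : ℂ} (hf : J2 f b0 b1 b2) (hg : J2 g c0 c1 c2) :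
    J2 (fun h => f h - g h) (b0 - c0) (b1 - c1) (b2 - c2) := by
  have := hf.add (g := fun h => -(g h)) (c0 := -c0) (c1 := -c1) (c2 := -c2)
    ⟨hg.an.neg, by simp [hg.v0], by rw [deriv.fun_neg, hg.v1], by rw [iteratedDeriv_fun_neg, hg.v2]⟩
  simpa [sub_eq_add_neg] using this

lemma J2.comp_neg {f : ℂ → ℂ} {b0 b1 b2 : ℂ} (hf : J2 f b0 b1 b2) :
    J2 (fun h => f (-h)) b0 (-b1) b2 := by
  refine ⟨?_, by simpa using hf.v0, ?_, ?_⟩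
  · have : (fun h : ℂ => f (-h)) = f ∘ (fun h : ℂ => -h) := rfl
    rw [this]
    exact (by simpa using hf.an : AnalyticAt ℂ f (-(0:ℂ))).comp (analyticAt_id.neg)
  · have := iteratedDeriv_comp_neg 1 f (0 : ℂ)
    simpa [iteratedDeriv_one, hf.v1] using this
  · have := iteratedDeriv_comp_neg 2 f (0 : ℂ)
    simpa [hf.v2] using this

lemma J2.cexp (w : ℂ) : J2 (fun h => Complex.exp (w * h)) 1 w (w ^ 2) := by
  have hd : ∀ y : ℂ, HasDerivAt (fun h => Complex.exp (w * h)) (Complex.exp (w * y) * w) y := by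
    intro y
    simpa using ((hasDerivAt_id y).const_mul w).cexp
  have hderiv : deriv (fun h => Complex.exp (w * h)) = fun y => Complex.exp (w * y) * w :=
    funext fun y => (hd y).deriv
  refine ⟨?_, by simp, by rw [hderiv]; simp, ?_⟩
  · exact ((Complex.differentiable_exp.comp ((differentiable_const w).mul differentiable_id)).analyticAt 0)
  · rw [iteratedDeriv_succ, iteratedDeriv_one, hderiv]
    have := ((hd 0).mul_const w).deriv
    rw [this]; simp [sq]

/-- The key limit lemma: an analytic function vanishing to second order. -/
lemma tendsto_div_sq {f : ℂ → ℂ} (hf : AnalyticAt ℂ f 0) (h0 : f 0 = 0) (h1 : deriv f 0 = 0) :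
    Tendsto (fun h => f h / h ^ 2) (𝓝[≠] (0:ℂ)) (𝓝 (iteratedDeriv 2 f 0 / 2)) := by
  obtain ⟨p, hp⟩ := hf
  have key : iteratedDeriv 2 f 0 = 2 * p.coeff 2 := by
    obtain ⟨R, hball⟩ := hp
    have := hball.factorial_smul (1 : ℂ) 2
    rw [iteratedDeriv_eq_iteratedFDeriv, ← this]
    show (Nat.factorial 2) • p.coeff 2 = 2 * p.coeff 2
    rw [show Nat.factorial 2 = 2 from rfl, nsmul_eq_mul]
    norm_num
  have hd1 := hp.has_fpower_series_dslope_fslope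
  have hd2 := hd1.has_fpower_series_dslope_fslope
  have hval : dslope (dslope f 0) 0 0 = p.coeff 2 := by
    rw [dslope_same, hd1.deriv]
    show p.fslope.coeff 1 = p.coeff 2
    simpa using FormalMultilinearSeries.coeff_fslope (p := p) (n := 1)
  have htd : Tendsto (dslope (dslope f 0) 0) (𝓝[≠] (0:ℂ)) (𝓝 (p.coeff 2)) := by
    rw [← hval]
    exact hd2.continuousAt.continuousWithinAt.tendsto
  have heq : ∀ᶠ h in 𝓝[≠] (0:ℂ), dslope (dslope f 0) 0 h = f h / h ^ 2 := by
    filter_upwards [self_mem_nhdsWithin] with h hh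
    rw [Set.mem_compl_iff, Set.mem_singleton_iff] at hh
    rw [dslope_of_ne _ hh, slope_def_field, dslope_of_ne _ hh, slope_def_field, dslope_same, h0, h1]
    simp only [sub_zero]
    rw [div_div, sq]
  have := htd.congr' (heq.mono fun h e => e)
  rw [key]
  convert this using 2
  ring

/-- The analytic continuation of `h ↦ h * ζ(1+h)` through `h = 0`. -/
noncomputable def phiZ : ℂ → ℂ := Function.update (fun z : ℂ => z * riemannZeta (1 + z)) 0 1

lemma phiZ_ne {h : ℂ} (hh : h ≠ 0) : phiZ h = h * riemannZeta (1 + h) :=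
  Function.update_of_ne hh _ _

lemma phiZ_zero : phiZ 0 = 1 := Function.update_self _ _ _

lemma tendsto_one_add_punctured :
    Tendsto (fun h : ℂ => 1 + h) (𝓝[≠] (0:ℂ)) (𝓝[≠] (1:ℂ)) := by
  apply tendsto_nhdsWithin_of_tendsto_nhds_of_eventually_within
  · exact ((continuous_const.add continuous_id).tendsto' 0 1 (by simp)).mono_left
      nhdsWithin_le_nhds
  · filter_upwards [self_mem_nhdsWithin] with h hh
    simpa using hh

lemma phiZ_tendsto : Tendsto phiZ (𝓝[≠] (0:ℂ)) (𝓝 1) := by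
  have := riemannZeta_residue_one.comp tendsto_one_add_punctured
  apply this.congr'
  filter_upwards [self_mem_nhdsWithin] with h hh
  rw [Set.mem_compl_iff, Set.mem_singleton_iff] at hh
  simp only [Function.comp_apply, add_sub_cancel_left]
  exact (phiZ_ne hh).symm

lemma phiZ_continuousAt : ContinuousAt phiZ 0 := by
  rw [← continuousWithinAt_compl_self]
  unfold ContinuousWithinAt
  rw [phiZ_zero]
  exact phiZ_tendsto

lemma phiZ_analyticAt : AnalyticAt ℂ phiZ 0 := by
  apply analyticAt_of_differentiable_on_punctured_nhds_of_continuousAt _ phiZ_continuousAt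
  filter_upwards [self_mem_nhdsWithin] with z hz
  rw [Set.mem_compl_iff, Set.mem_singleton_iff] at hz
  have h1 : (1 : ℂ) + z ≠ 1 := by simpa using hz
  have hd : DifferentiableAt ℂ (fun w : ℂ => w * riemannZeta (1 + w)) z := by
    apply differentiableAt_fun_id.mul
    exact (differentiableAt_riemannZeta h1).comp z ((differentiableAt_const _).add differentiableAt_id)
  apply hd.congr_of_eventuallyEq
  filter_upwards [isOpen_compl_singleton.mem_nhds hz] with w hw
  exact phiZ_ne hw

lemma phiZ_deriv : deriv phiZ 0 = (Real.eulerMascheroniConstant : ℂ) := by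
  have hda : HasDerivAt phiZ (deriv phiZ 0) 0 :=
    phiZ_analyticAt.differentiableAt.hasDerivAt
  have hslope := hasDerivAt_iff_tendsto_slope.mp hda
  have h2 : Tendsto (fun h : ℂ => riemannZeta (1 + h) - 1 / h) (𝓝[≠] (0:ℂ))
      (𝓝 (Real.eulerMascheroniConstant : ℂ)) := by
    have := tendsto_riemannZeta_sub_one_div.comp tendsto_one_add_punctured
    apply this.congr'
    filter_upwards [self_mem_nhdsWithin] with h hh
    simp [Function.comp_apply, add_sub_cancel_left]
  have heq : ∀ᶠ h in 𝓝[≠] (0:ℂ), slope phiZ 0 h = riemannZeta (1 + h) - 1 / h := by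
    filter_upwards [self_mem_nhdsWithin] with h hh
    rw [Set.mem_compl_iff, Set.mem_singleton_iff] at hh
    rw [slope_def_field, phiZ_ne hh, phiZ_zero]
    field_simp
    ring
  exact tendsto_nhds_unique (hslope.congr' heq) h2

lemma sigmaC_analytic (r : ℕ) (hr : 0 < r) :
    AnalyticAt ℂ (fun h : ℂ => sigmaC (1 + 2 * h) r) 0 := by
  have : (fun h : ℂ => sigmaC (1 + 2 * h) r) =
      fun h : ℂ => ∑ d ∈ r.divisors, Complex.exp (Complex.log d * (1 + 2 * h)) := by
    funext h
    unfold sigmaC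
    refine Finset.sum_congr rfl fun d hd => ?_
    have hd0 : (d : ℂ) ≠ 0 := by
      have := Nat.pos_of_mem_divisors hd
      exact_mod_cast this.ne'
    rw [Complex.cpow_def_of_ne_zero hd0]
  rw [this]
  apply Differentiable.analyticAt
  apply Differentiable.fun_sum
  intro d _
  exact Complex.differentiable_exp.comp
    ((differentiable_const _).mul ((differentiable_const _).add
      ((differentiable_const _).mul differentiable_id)))

lemma zeta22_analytic : AnalyticAt ℂ (fun h : ℂ => riemannZeta (2 + 2 * h)) 0 := by
  rw [analyticAt_iff_eventually_differentiableAt]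
  have hopen : {h : ℂ | 2 + 2 * h ≠ 1} ∈ 𝓝 (0:ℂ) := by
    apply IsOpen.mem_nhds
    · exact isOpen_ne.preimage (by continuity)
    · norm_num
  filter_upwards [hopen] with h hh
  exact (differentiableAt_riemannZeta hh).comp h
    ((differentiableAt_const _).add ((differentiableAt_const _).mul differentiableAt_id))

lemma zeta2_ne : riemannZeta 2 ≠ 0 :=
  riemannZeta_ne_zero_of_one_lt_re (by norm_num)

lemma Afun_analytic (r : ℕ) (hr : 0 < r) :
    AnalyticAt ℂ (fun h : ℂ => sigmaC (1 + 2 * h) r / riemannZeta (2 + 2 * h)) 0 := by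
  apply (sigmaC_analytic r hr).div zeta22_analytic
  have : (2 : ℂ) + 2 * 0 = 2 := by norm_num
  rw [this]
  exact zeta2_ne

lemma J2.const (c : ℂ) : J2 (fun _ => c) c 0 0 := by
  refine ⟨analyticAt_const, rfl, by simp, ?_⟩
  rw [iteratedDeriv_succ, iteratedDeriv_one, deriv_const']
  simp

lemma J2.cpow1 {b : ℂ} (hb : b ≠ 0) :
    J2 (fun h => b ^ h) 1 (Complex.log b) (Complex.log b ^ 2) := by
  have : (fun h : ℂ => b ^ h) = fun h => Complex.exp (Complex.log b * h) := by
    funext h; rw [Complex.cpow_def_of_ne_zero hb]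
  rw [this]; exact J2.cexp _

lemma J2.cpow2 {b : ℂ} (hb : b ≠ 0) :
    J2 (fun h => b ^ (2 * h)) 1 (2 * Complex.log b) ((2 * Complex.log b) ^ 2) := by
  have : (fun h : ℂ => b ^ (2 * h)) = fun h => Complex.exp ((2 * Complex.log b) * h) := by
    funext h; rw [Complex.cpow_def_of_ne_zero hb]; ring_nf
  rw [this]; exact J2.cexp _

/-- The limit `m(x,r) = lim_{h→0} m(x,r,h)` exists and equals the stated expression in
terms of `γ₀` and the derivatives of `h ↦ σ_{1+2h}(r)/ζ(2+2h)` at `h = 0`. -/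
theorem stmt_15 (x : ℝ) (hx : 0 < x) (r : ℕ) (hr : 0 < r) :
    Tendsto (fun h : ℂ => mxrh x r h) (nhdsWithin 0 {0}ᶜ)
      (nhds
        ((sigmaC 1 r / riemannZeta 2) *
            ((Real.log x * Real.log (1 + x) : ℝ)
              + (Real.log (x * (1 + x)) : ℝ) *
                  ((2 * Real.eulerMascheroniConstant - Real.log r : ℝ))
              + ((2 * Real.eulerMascheroniConstant - Real.log r : ℝ)) ^ 2)
          + ((Real.log (x * (1 + x)) + 4 * Real.eulerMascheroniConstant
              - 2 * Real.log r : ℝ)) *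
              deriv (fun h : ℂ => sigmaC (1 + 2 * h) r / riemannZeta (2 + 2 * h)) 0
          + iteratedDeriv 2 (fun h : ℂ => sigmaC (1 + 2 * h) r / riemannZeta (2 + 2 * h)) 0)) := by
  have hx0 : (x : ℂ) ≠ 0 := by exact_mod_cast hx.ne'
  have h1x : (0:ℝ) < 1 + x := by linarith
  have h1x0 : (1 : ℂ) + (x:ℂ) ≠ 0 := by
    rw [show (1:ℂ) + (x:ℂ) = ((1 + x : ℝ) : ℂ) by push_cast; ring]
    exact_mod_cast h1x.ne'
  have hr0 : (r : ℂ) ≠ 0 := by exact_mod_cast hr.ne'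
  set A := fun h : ℂ => sigmaC (1 + 2 * h) r / riemannZeta (2 + 2 * h) with hA
  -- jets
  have jA : J2 A (A 0) (deriv A 0) (iteratedDeriv 2 A 0) := ⟨Afun_analytic r hr, rfl, rfl, rfl⟩
  have jphi : J2 phiZ 1 (Real.eulerMascheroniConstant : ℂ) (iteratedDeriv 2 phiZ 0) :=
    ⟨phiZ_analyticAt, phiZ_zero, phiZ_deriv, rfl⟩
  have jx : J2 (fun h : ℂ => (x:ℂ) ^ h) 1 (Complex.log x) (Complex.log x ^ 2) := J2.cpow1 hx0
  have jy : J2 (fun h : ℂ => ((1:ℂ) + x) ^ h) 1 (Complex.log ((1:ℂ) + x))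
      (Complex.log ((1:ℂ) + x) ^ 2) := J2.cpow1 h1x0
  have jr1 : J2 (fun h : ℂ => (r:ℂ) ^ h) 1 (Complex.log r) (Complex.log r ^ 2) := J2.cpow1 hr0
  have jr2 : J2 (fun h : ℂ => (r:ℂ) ^ (2 * h)) 1 (2 * Complex.log r)
      ((2 * Complex.log r) ^ 2) := J2.cpow2 hr0
  have jT1 := (jA.mul (jphi.mul jphi)).mul (jx.mul jy)
  have jT2 := jr2.mul (jA.comp_neg.mul (jphi.comp_neg.mul jphi.comp_neg))
  have jT3 := (J2.const (A 0)).mul ((jphi.mul jphi.comp_neg).mul (jr1.mul (jx.add jy)))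
  have jF := (jT1.add jT2).sub jT3
  have hlim := tendsto_div_sq jF.an (by beta_reduce; rw [jF.v0]; ring)
    (by rw [jF.v1]; ring)
  have heq : ∀ᶠ h in 𝓝[≠] (0:ℂ),
      (fun h : ℂ =>
        A h * (phiZ h * phiZ h) * ((x:ℂ) ^ h * ((1:ℂ) + x) ^ h)
          + (r:ℂ) ^ (2 * h) * (A (-h) * (phiZ (-h) * phiZ (-h)))
          - A 0 * (phiZ h * phiZ (-h) * ((r:ℂ) ^ h * ((x:ℂ) ^ h + ((1:ℂ) + x) ^ h)))) h / h ^ 2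
      = mxrh x r h := by
    filter_upwards [self_mem_nhdsWithin] with h hh
    rw [Set.mem_compl_iff, Set.mem_singleton_iff] at hh
    beta_reduce
    rw [phiZ_ne hh, phiZ_ne (neg_ne_zero.mpr hh), hA]
    simp only [mxrh]
    have e1 : (1:ℂ) + -h = 1 - h := by ring
    have e2 : (1:ℂ) + 2 * -h = 1 - 2 * h := by ring
    have e3 : (2:ℂ) + 2 * -h = 2 - 2 * h := by ring
    have e4 : (1:ℂ) + 2 * (0:ℂ) = 1 := by norm_num
    have e5 : (2:ℂ) + 2 * (0:ℂ) = 2 := by norm_num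
    rw [e1, e2, e3, e4, e5, div_eq_iff (pow_ne_zero 2 hh)]
    ring
  have final := hlim.congr' heq
  have ha0 : A 0 = sigmaC 1 r / riemannZeta 2 := by rw [hA]; norm_num
  have hlogx : Complex.log (x:ℂ) = (Real.log x : ℂ) := (Complex.ofReal_log hx.le).symm
  have hlogy : Complex.log ((1:ℂ) + x) = (Real.log (1 + x) : ℂ) := by
    rw [show (1:ℂ) + (x:ℂ) = ((1 + x : ℝ) : ℂ) by push_cast; ring]
    exact (Complex.ofReal_log h1x.le).symm
  have hlogr : Complex.log (r:ℂ) = (Real.log r : ℂ) := by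
    rw [show ((r:ℕ) : ℂ) = ((r : ℝ) : ℂ) by push_cast; rfl]
    exact (Complex.ofReal_log (Nat.cast_nonneg r)).symm
  have hlogprod : Real.log (x * (1 + x)) = Real.log x + Real.log (1 + x) :=
    Real.log_mul hx.ne' h1x.ne'
  convert final using 2
  rw [jF.v2, ← ha0, hlogprod, hlogx, hlogy, hlogr]
  push_cast
  ring
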